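/- A nonempty strict partition λ = (λ_1 > … > λ_k > 0) satisfies the −3 shift condition if and only if λ = (3m+1, 3m−2, 3m−5, …, 4, 1) or λ = (3m+2, 3m−1, 3m−4, …, 5, 2) for some integer m ≥ 0; that is, if and only if the parts of λ are exactly all positive integers congruent to λ_1 modulo 3 that are at most λ_1, where λ_1 ≡ 1 or 2 (mod 3). -/
import Mathlib


/-- We encode a strict partition `λ = (λ_1 > λ_2 > ⋯ > λ_k > 0)` as the finite set
`S` of its (positive, distinct) parts; its largest part `λ_1` is `S.sup id`.
`VSet S` is the set `V_λ = {λ_1 + λ_i + 1 : 1 ≤ i ≤ k} ∪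
{λ_1 - j + 1 : 0 < j < λ_1, j not a part of λ}`. -/
def VSet (S : Finset ℕ) : Set ℕ :=
  {μ | ∃ i ∈ S, μ = S.sup id + i + 1} ∪
    {μ | ∃ j : ℕ, 0 < j ∧ j < S.sup id ∧ j ∉ S ∧ μ = S.sup id - j + 1}

/-- The `-n` shift condition on a strict partition `λ` (encoded as the finite set `S` of
its parts): for every `μ ∈ V_λ`, either `μ - n ∈ V_λ` or `μ - n ≤ 0`. -/
def ShiftCondition (n : ℕ) (S : Finset ℕ) : Prop :=
  ∀ μ ∈ VSet S, μ - n ∈ VSet S ∨ μ ≤ n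

lemma mem_VSet (S : Finset ℕ) (μ : ℕ) :
    μ ∈ VSet S ↔ (∃ i ∈ S, μ = S.sup id + i + 1) ∨
      (∃ j : ℕ, 0 < j ∧ j < S.sup id ∧ j ∉ S ∧ μ = S.sup id - j + 1) := by
  simp [VSet, Set.mem_union, Set.mem_setOf_eq]

/-- a nonempty strict partition satisfies the `-3` shift condition iff it is
`(3m+1, 3m-2, …, 4, 1)` or `(3m+2, 3m-1, …, 5, 2)` for some `m ≥ 0`, i.e. its set of
parts is `{3i + a : 0 ≤ i ≤ m}` with `a = 1` or `a = 2`. -/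
theorem shift_three_characterization (S : Finset ℕ) (hpos : ∀ x ∈ S, 0 < x)
    (hne : S.Nonempty) :
    ShiftCondition 3 S ↔
      ∃ (a m : ℕ), (a = 1 ∨ a = 2) ∧
        S = (Finset.range (m + 1)).image (fun i => 3 * i + a) := by
  constructor
  · intro h
    obtain ⟨x0, hx0, hx0eq⟩ := Finset.exists_mem_eq_sup S hne id
    set L := S.sup id with hLdef
    have hLS : L ∈ S := by rw [hx0eq]; exact hx0
    have hLpos : 0 < L := hpos _ hLS
    have hle : ∀ x ∈ S, x ≤ L := fun x hx => Finset.le_sup (f := id) hx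
    -- no number ≡ 1 (mod 3) lies in V
    have h1 : ∀ k, 3 * k + 1 ∉ VSet S := by
      intro k
      induction k with
      | zero =>
        rw [mem_VSet]
        rintro (⟨i, hi, hieq⟩ | ⟨j, hj1, hj2, hj3, hjeq⟩)
        · have := hpos i hi; omega
        · omega
      | succ k ih =>
        intro hmem
        rcases h _ hmem with hv | hle'
        · have he : 3 * (k + 1) + 1 - 3 = 3 * k + 1 := by omega
          rw [he] at hv; exact ih hv
        · omega
    have h2L : 2 * L + 1 ∈ VSet S := by
      rw [mem_VSet]; exact Or.inl ⟨L, hLS, by omega⟩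
    have hLmod : L % 3 ≠ 0 := by
      intro h0
      exact h1 (2 * (L / 3)) (by convert h2L using 1; omega)
    -- downward closure
    have hdown : ∀ i ∈ S, 4 ≤ i → i - 3 ∈ S := by
      intro i hi h4
      have hmem : L + i + 1 ∈ VSet S := by
        rw [mem_VSet]; exact Or.inl ⟨i, hi, rfl⟩
      rcases h _ hmem with hv | hle'
      · rw [mem_VSet] at hv
        rcases hv with ⟨i', hi', hieq⟩ | ⟨j, hj1, hj2, hj3, hjeq⟩
        · have : i' = i - 3 := by omega
          rwa [this] at hi'
        · omega
      · omega
    -- 3 ∉ S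
    have h3 : 3 ∉ S := by
      intro h3S
      have hmem : L + 3 + 1 ∈ VSet S := by
        rw [mem_VSet]; exact Or.inl ⟨3, h3S, rfl⟩
      rcases h _ hmem with hv | hle'
      · rw [mem_VSet] at hv
        rcases hv with ⟨i', hi', hieq⟩ | ⟨j, hj1, hj2, hj3, hjeq⟩
        · have := hpos i' hi'; omega
        · omega
      · omega
    -- no part divisible by 3
    have h0mod : ∀ i, i ∈ S → i % 3 = 0 → False := by
      intro i
      induction i using Nat.strong_induction_on with
      | _ i ih =>
        intro hiS him
        have hip := hpos i hiS
        by_cases h4 : 4 ≤ i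
        · exact ih (i - 3) (by omega) (hdown i hiS h4) (by omega)
        · have : i = 3 := by omega
          exact h3 (this ▸ hiS)
    -- every part is ≡ L (mod 3)
    have hmod : ∀ i ∈ S, i % 3 = L % 3 := by
      intro i hi
      have hnv : (L + i + 1) % 3 ≠ 1 := by
        intro heq
        have hmem : L + i + 1 ∈ VSet S := by
          rw [mem_VSet]; exact Or.inl ⟨i, hi, rfl⟩
        exact h1 ((L + i + 1) / 3) (by convert hmem using 1; omega)
      have hne0 : i % 3 ≠ 0 := fun h0 => h0mod i hi h0
      omega
    -- upward fill
    have hup : ∀ j, 0 < j → j < L → j % 3 = L % 3 → j ∈ S := by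
      intro j hj1 hj2 hj3
      by_contra hjS
      have hmem : L - j + 1 ∈ VSet S := by
        rw [mem_VSet]; exact Or.inr ⟨j, hj1, hj2, hjS, rfl⟩
      exact h1 ((L - j) / 3) (by convert hmem using 1; omega)
    refine ⟨L % 3, L / 3, by omega, ?_⟩
    ext x
    simp only [Finset.mem_image, Finset.mem_range]
    constructor
    · intro hx
      have hx3 := hmod x hx
      have hxle := hle x hx
      have hxp := hpos x hx
      exact ⟨x / 3, by omega, by omega⟩
    · rintro ⟨i, hi, rfl⟩
      rcases eq_or_lt_of_le (show 3 * i + L % 3 ≤ L by omega) with heq | hlt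
      · rwa [heq]
      · exact hup _ (by omega) hlt (by omega)
  · rintro ⟨a, m, ha, rfl⟩
    set T := (Finset.range (m + 1)).image (fun i => 3 * i + a) with hT
    have hmemT : ∀ x, x ∈ T ↔ ∃ t ≤ m, x = 3 * t + a := by
      intro x
      simp only [hT, Finset.mem_image, Finset.mem_range]
      constructor
      · rintro ⟨t, ht, rfl⟩; exact ⟨t, by omega, rfl⟩
      · rintro ⟨t, ht, rfl⟩; exact ⟨t, by omega, rfl⟩
    have hLT : T.sup id = 3 * m + a := by
      apply le_antisymm
      · apply Finset.sup_le
        intro x hx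
        obtain ⟨t, ht, rfl⟩ := (hmemT x).1 hx
        simp only [id]; omega
      · exact Finset.le_sup (f := id) ((hmemT (3 * m + a)).2 ⟨m, le_refl m, rfl⟩)
    -- membership characterization
    have hchar : ∀ j, j ∈ T ↔ (j % 3 = a % 3 ∧ 0 < j ∧ j ≤ 3 * m + a) := by
      intro j
      rw [hmemT]
      constructor
      · rintro ⟨t, ht, rfl⟩; omega
      · rintro ⟨h1, h2, h3⟩; exact ⟨j / 3, by omega, by omega⟩
    intro μ hμ
    rw [mem_VSet, hLT] at hμ
    rcases hμ with ⟨i, hi, rfl⟩ | ⟨j, hj1, hj2, hj3, rfl⟩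
    · obtain ⟨t, ht, rfl⟩ := (hmemT i).1 hi
      rcases Nat.eq_zero_or_pos t with rfl | htp
      · -- smallest part
        rcases ha with rfl | rfl
        · -- a = 1
          rcases Nat.eq_zero_or_pos m with rfl | hmp
          · right; omega
          · left
            rw [mem_VSet, hLT]
            refine Or.inr ⟨2, by omega, by omega, ?_, by omega⟩
            rw [hchar]; omega
        · -- a = 2
          left
          rw [mem_VSet, hLT]
          refine Or.inr ⟨1, by omega, by omega, ?_, by omega⟩
          rw [hchar]; omega
      · left
        rw [mem_VSet, hLT]
        exact Or.inl ⟨3 * (t - 1) + a, (hmemT _).2 ⟨t - 1, by omega, rfl⟩, by omega⟩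
    · -- second set element
      by_cases hsmall : 3 * m + a - j + 1 ≤ 3
      · right; omega
      · left
        have hj3' : j % 3 ≠ a % 3 := by
          intro heq
          exact hj3 ((hchar j).2 ⟨heq, hj1, by omega⟩)
        have hjlt : j + 3 < 3 * m + a := by
          rcases Nat.lt_or_ge (j + 3) (3 * m + a) with h | h
          · exact h
          · exfalso
            have : j = 3 * m + a - 3 := by omega
            apply hj3'
            omega
        rw [mem_VSet, hLT]
        refine Or.inr ⟨j + 3, by omega, hjlt, ?_, by omega⟩
        intro hmem'
        have := (hchar (j + 3)).1 hmem'
        omega
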